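/- Let q be a real number with 0 ≤ q ≤ 1/3, let p = 1 − q, and let k and i be natural numbers. Then C(2k+i, k) · p^k · q^(k+i) ≤ (1/2)^i, where C(·,·) denotes the binomial coefficient. -/

import Mathlib

/-- For a real `q` with `0 ≤ q ≤ 1/3`, `p = 1 - q`, and naturals `k`, `i`:
`C(2k+i, k) · p^k · q^(k+i) ≤ (1/2)^i`. -/
theorem choose_mul_pow_le_half_pow (q : ℝ) (hq0 : 0 ≤ q) (hq : q ≤ 1 / 3) (k i : ℕ) :
    (Nat.choose (2 * k + i) k : ℝ) * (1 - q) ^ k * q ^ (k + i) ≤ (1 / 2) ^ i := by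
  set p : ℝ := 1 - q with hpdef
  have hp : (0:ℝ) < p := by simp [hpdef]; linarith
  have hchoose : Nat.choose (2 * k + i) (k + i) = Nat.choose (2 * k + i) k := by
    have h : 2 * k + i - k = k + i := by omega
    rw [← h, Nat.choose_symm (by omega)]
  have key : (Nat.choose (2 * k + i) k : ℝ) * p ^ (k + i) * q ^ k ≤ 1 := by
    have hsum := add_pow p q (2 * k + i)
    have hpq : p + q = 1 := by simp [hpdef]
    rw [hpq, one_pow] at hsum
    have hmem : k + i ∈ Finset.range (2 * k + i + 1) := by
      simp; omega
    have hterm := Finset.single_le_sum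
      (f := fun j => p ^ j * q ^ (2 * k + i - j) * (Nat.choose (2 * k + i) j : ℝ))
      (fun j _ => by positivity) hmem
    rw [← hsum] at hterm
    have hsub : 2 * k + i - (k + i) = k := by omega
    simp only [hsub, hchoose] at hterm
    have heq : (Nat.choose (2 * k + i) k : ℝ) * p ^ (k + i) * q ^ k
        = p ^ (k + i) * q ^ k * (Nat.choose (2 * k + i) k : ℝ) := by ring
    rw [heq]; exact hterm
  have hqp : q / p ≤ 1 / 2 := by
    rw [div_le_iff₀ hp]; simp [hpdef]; linarith
  have hqp0 : 0 ≤ q / p := div_nonneg hq0 hp.le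
  calc (Nat.choose (2 * k + i) k : ℝ) * p ^ k * q ^ (k + i)
      = ((Nat.choose (2 * k + i) k : ℝ) * p ^ (k + i) * q ^ k) * (q / p) ^ i := by
        field_simp
        have hpi : p ^ i * p⁻¹ ^ i = 1 := by rw [← mul_pow, mul_inv_cancel₀ hp.ne', one_pow]
        linear_combination (-((Nat.choose (2 * k + i) k : ℝ) * p ^ k * q ^ k * q ^ i)) * hpi
    _ ≤ 1 * (1 / 2) ^ i :=
        mul_le_mul key (pow_le_pow_left₀ hqp0 hqp i) (pow_nonneg hqp0 i) zero_le_one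
    _ = (1 / 2) ^ i := one_mul _
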